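/- For γ > 0 and any corner point s ∈ {0,1}^J, the ridge-regularized COMBSS estimator β̃^Ridge_s = [X_s^T X_s + n(I − T_s²) + γ T_s²]^{-1} X_s^T y satisfies X_s β̃^Ridge_s = X_{[s]} [X_{[s]}^T X_{[s]} + γ I]^{-1} X_{[s]}^T y, i.e. its fitted values agree with those of the ordinary ridge estimator on the selected groups. -/

import Mathlib

open Matrix

/-- Group-structured diagonal matrix `T_s` repeating each `s j` over group `j`. -/
noncomputable def Tmat {p J : ℕ} (g : Fin p → Fin J) (s : Fin J → ℝ) :
    Matrix (Fin p) (Fin p) ℝ :=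
  Matrix.diagonal fun i => s (g i)

/-- `X_{[s]}`: the submatrix of `X` formed by the columns of groups with `s j = 1`. -/
noncomputable def Xsub {n p J : ℕ} (X : Matrix (Fin n) (Fin p) ℝ)
    (g : Fin p → Fin J) (s : Fin J → ℝ) :
    Matrix (Fin n) {i : Fin p // s (g i) = 1} ℝ :=
  fun a i => X a i.1

/-- For `γ > 0` and any corner point `s ∈ {0,1}^J`, the ridge-regularized COMBSS estimator
`β̃^Ridge_s = [X_sᵀ X_s + n(I − T_s²) + γ T_s²]⁻¹ X_sᵀ y` has fitted values agreeing with
those of the ordinary ridge estimator on the selected groups: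
`X_s β̃^Ridge_s = X_{[s]} [X_{[s]}ᵀ X_{[s]} + γ I]⁻¹ X_{[s]}ᵀ y`. -/
theorem ridge_fitted_values_agree_at_corner (n p J : ℕ) (hn : 0 < n)
    (γ : ℝ) (hγ : 0 < γ)
    (X : Matrix (Fin n) (Fin p) ℝ) (g : Fin p → Fin J) (y : Fin n → ℝ)
    (s : Fin J → ℝ) (hs : ∀ j, s j = 0 ∨ s j = 1) :
    (X * Tmat g s).mulVec
        ((((X * Tmat g s)ᵀ * (X * Tmat g s) +
            (n : ℝ) • ((1 : Matrix (Fin p) (Fin p) ℝ) - Tmat g s * Tmat g s) +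
            γ • (Tmat g s * Tmat g s))⁻¹).mulVec ((X * Tmat g s)ᵀ.mulVec y)) =
      (Xsub X g s).mulVec
        ((((Xsub X g s)ᵀ * Xsub X g s +
            γ • (1 : Matrix {i : Fin p // s (g i) = 1} {i : Fin p // s (g i) = 1} ℝ))⁻¹).mulVec
          ((Xsub X g s)ᵀ.mulVec y)) := by
  classical
  set T : Matrix (Fin p) (Fin p) ℝ := Tmat g s with hTdef
  set P : Matrix (Fin p) {i : Fin p // s (g i) = 1} ℝ :=
    fun i d => if i = d.1 then 1 else 0 with hPdef
  -- basic facts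
  have hT2 : T * T = T := by
    rw [hTdef]
    unfold Tmat
    rw [Matrix.diagonal_mul_diagonal]
    have : (fun i => s (g i) * s (g i)) = fun i => s (g i) := by
      funext i
      rcases hs (g i) with h | h <;> rw [h] <;> ring
    rw [this]
  have hTsymm : Tᵀ = T := by
    rw [hTdef]; unfold Tmat; exact Matrix.diagonal_transpose _
  have hPtP : Pᵀ * P = 1 := by
    ext d d'
    simp only [Matrix.mul_apply, Matrix.transpose_apply, Matrix.one_apply]
    simp only [hPdef]
    rw [Finset.sum_eq_single d.1]
    · simp [Subtype.ext_iff, eq_comm]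
    · intro i _ hi
      simp [hi]
    · simp
  have hPPt : P * Pᵀ = T := by
    ext i i'
    simp only [Matrix.mul_apply, Matrix.transpose_apply]
    simp only [hPdef, hTdef]
    unfold Tmat
    by_cases h : s (g i) = 1
    · rw [Finset.sum_eq_single (⟨i, h⟩ : {i : Fin p // s (g i) = 1})]
      · by_cases hii : i = i'
        · subst hii; simp [Matrix.diagonal_apply, h]
        · have hii' : ¬ i' = i := fun hc => hii hc.symm
          simp [Matrix.diagonal_apply, hii, hii']
      · intro d _ hd
        have : ¬ i = d.1 := by
          intro hc
          apply hd
          apply Subtype.ext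
          exact hc.symm
        simp [this]
      · simp
    · rw [Finset.sum_eq_zero]
      · have h0 : s (g i) = 0 := (hs (g i)).resolve_right h
        by_cases hii : i = i'
        · subst hii; simp [Matrix.diagonal_apply, h0]
        · simp [Matrix.diagonal_apply, hii]
      · intro d _
        have : ¬ i = d.1 := fun hc => h (hc ▸ d.2)
        simp [this]
  have hTP : T * P = P := by rw [← hPPt, Matrix.mul_assoc, hPtP, Matrix.mul_one]
  have hPtT : Pᵀ * T = Pᵀ := by rw [← hPPt, ← Matrix.mul_assoc, hPtP, Matrix.one_mul]
  have hXsub : Xsub X g s = X * P := by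
    ext a d
    simp only [Matrix.mul_apply]
    simp only [hPdef]
    unfold Xsub
    rw [Finset.sum_eq_single d.1] <;> simp_all
  -- the ridge matrix on selected groups
  set A : Matrix {i : Fin p // s (g i) = 1} {i : Fin p // s (g i) = 1} ℝ :=
    (Xsub X g s)ᵀ * Xsub X g s + γ • 1 with hAdef
  have hApd : A.PosDef := by
    apply Matrix.PosDef.posSemidef_add
    · have := Matrix.posSemidef_conjTranspose_mul_self (Xsub X g s)
      simpa using this
    · have h1 : (γ • (1 : Matrix {i : Fin p // s (g i) = 1} {i : Fin p // s (g i) = 1} ℝ))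
          = Matrix.diagonal (fun _ => γ) := by
        ext a b
        by_cases hab : a = b <;> simp [Matrix.one_apply, hab]
      rw [h1]
      exact Matrix.posDef_diagonal_iff.mpr fun _ => hγ
  have hAinv : A * A⁻¹ = 1 := Matrix.mul_nonsing_inv _ hApd.det_pos.ne'.isUnit
  -- the big matrix
  set M : Matrix (Fin p) (Fin p) ℝ :=
    (X * T)ᵀ * (X * T) + (n : ℝ) • ((1 : Matrix (Fin p) (Fin p) ℝ) - T * T) +
      γ • (T * T) with hMdef
  have hMdef' : M = T * (Xᵀ * X) * T + (n : ℝ) • ((1 : Matrix (Fin p) (Fin p) ℝ) - T) +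
      γ • T := by
    rw [hMdef, hT2, Matrix.transpose_mul, hTsymm]
    simp [Matrix.mul_assoc]
  have hT1T : T * (1 - T) = 0 := by rw [mul_sub, mul_one, hT2, sub_self]
  have h1TP : ((1 : Matrix (Fin p) (Fin p) ℝ) - T) * P = 0 := by
    rw [Matrix.sub_mul, Matrix.one_mul, hTP, sub_self]
  have hXPt : (X * P)ᵀ * (X * P) = Pᵀ * (Xᵀ * X) * P := by
    rw [Matrix.transpose_mul]
    simp [Matrix.mul_assoc]
  have hMP : M * P = P * A := by
    rw [hMdef', hAdef, hXsub]
    rw [Matrix.add_mul, Matrix.add_mul, Matrix.smul_mul, Matrix.smul_mul, h1TP, smul_zero,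
      add_zero, hTP, Matrix.mul_assoc (T * (Xᵀ * X)) T P, hTP]
    rw [Matrix.mul_add, Matrix.mul_smul, Matrix.mul_one, hXPt]
    congr 1
    rw [← hPPt]
    simp [Matrix.mul_assoc]
  -- the explicit inverse of M
  set N : Matrix (Fin p) (Fin p) ℝ :=
    P * A⁻¹ * Pᵀ + (n : ℝ)⁻¹ • ((1 : Matrix (Fin p) (Fin p) ℝ) - T) with hNdef
  have hM1T : M * ((1 : Matrix (Fin p) (Fin p) ℝ) - T) = (n : ℝ) • (1 - T) := by
    rw [hMdef']
    rw [Matrix.add_mul, Matrix.add_mul, Matrix.smul_mul, Matrix.smul_mul]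
    rw [Matrix.mul_assoc (T * (Xᵀ * X)) T (1 - T), hT1T, Matrix.mul_zero, zero_add,
      smul_zero, add_zero]
    have h1T1T : ((1 : Matrix (Fin p) (Fin p) ℝ) - T) * (1 - T) = 1 - T := by
      rw [Matrix.sub_mul, Matrix.one_mul, hT1T, sub_zero]
    rw [h1T1T]
  have hnne : ((n : ℝ)) ≠ 0 := Nat.cast_ne_zero.mpr hn.ne'
  have hMN : M * N = 1 := by
    rw [hNdef, Matrix.mul_add, Matrix.mul_smul, hM1T, smul_smul, inv_mul_cancel₀ hnne,
      one_smul, ← Matrix.mul_assoc, ← Matrix.mul_assoc, hMP, Matrix.mul_assoc P A A⁻¹,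
      hAinv, Matrix.mul_one, hPPt]
    abel
  have hMinvN : M⁻¹ = N := Matrix.inv_eq_right_inv hMN
  -- conclude
  rw [hMinvN, hXsub, Matrix.mulVec_mulVec, Matrix.mulVec_mulVec, Matrix.mulVec_mulVec,
    Matrix.mulVec_mulVec]
  have hXTN : (X * T) * N = (X * P) * A⁻¹ * Pᵀ := by
    rw [hNdef, Matrix.mul_add, Matrix.mul_smul]
    rw [Matrix.mul_assoc X T (1 - T), hT1T, Matrix.mul_zero, smul_zero, add_zero]
    rw [← Matrix.mul_assoc, ← Matrix.mul_assoc, Matrix.mul_assoc X T P, hTP]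
  rw [hXTN, Matrix.transpose_mul X T, hTsymm, Matrix.transpose_mul X P]
  rw [Matrix.mul_assoc ((X * P) * A⁻¹) Pᵀ (T * Xᵀ), ← Matrix.mul_assoc Pᵀ T Xᵀ, hPtT,
    ← Matrix.mul_assoc]
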